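/- Let P₀, P₁ be Borel probability measures on ℝ^m and let F = { f : f(z) = aᵀz + b, a ∈ ℝ^m, b ∈ ℝ } be the class of affine prediction models. If d_sig(P₀,P₁) < ε for some ε > 0, then there exists a constant c > 0 not depending on ε such that sup over f ∈ F and τ ∈ ℝ of |P₀{z : f(z) > τ} − P₁{z : f(z) > τ}| < c·ε. -/

import Mathlib

open MeasureTheory Filter Topology

/-- The sigmoid function `σ(t) = 1/(1 + e^{-t})`. -/
noncomputable def sigmoid (t : ℝ) : ℝ := 1 / (1 + Real.exp (-t))

/-- The sigmoid IPM between two measures on `ℝ^m`. -/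
noncomputable def sigmoidIPM {m : ℕ} (P₀ P₁ : Measure (Fin m → ℝ)) : ℝ :=
  ⨆ p : (Fin m → ℝ) × ℝ,
    |(∫ z, sigmoid ((∑ i, p.1 i * z i) + p.2) ∂P₀) -
      ∫ z, sigmoid ((∑ i, p.1 i * z i) + p.2) ∂P₁|

lemma sigmoid_nonneg (t : ℝ) : 0 ≤ sigmoid t := by
  unfold sigmoid; positivity

lemma sigmoid_le_one (t : ℝ) : sigmoid t ≤ 1 := by
  unfold sigmoid
  rw [div_le_one (by positivity)]
  linarith [Real.exp_pos (-t)]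

lemma sigmoid_continuous : Continuous sigmoid := by
  unfold sigmoid
  refine continuous_const.div (continuous_const.add (Real.continuous_exp.comp continuous_neg)) ?_
  intro t
  have := Real.exp_pos (-t)
  positivity

lemma sigmoid_tendsto_one : Tendsto sigmoid atTop (𝓝 1) := by
  have h : Tendsto (fun t : ℝ => Real.exp (-t)) atTop (𝓝 0) :=
    Real.tendsto_exp_atBot.comp tendsto_neg_atTop_atBot
  have h1 : Tendsto (fun t : ℝ => 1 + Real.exp (-t)) atTop (𝓝 1) := by
    simpa using (tendsto_const_nhds (x := (1:ℝ)) (f := atTop)).add h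
  have h2 : Tendsto (fun t : ℝ => 1 / (1 + Real.exp (-t))) atTop (𝓝 (1 / 1)) :=
    tendsto_const_nhds.div h1 one_ne_zero
  unfold sigmoid
  simpa using h2

lemma sigmoid_tendsto_zero : Tendsto sigmoid atBot (𝓝 0) := by
  have h : Tendsto (fun t : ℝ => Real.exp (-t)) atBot atTop :=
    Real.tendsto_exp_atTop.comp tendsto_neg_atBot_atTop
  have h1 : Tendsto (fun t : ℝ => 1 + Real.exp (-t)) atBot atTop :=
    tendsto_atTop_add_const_left _ 1 h
  have h2 := tendsto_inv_atTop_zero.comp h1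
  unfold sigmoid
  simpa [one_div, Function.comp_def] using h2

lemma arg_tendsto_top {c : ℝ} (hc : 0 < c) :
    Tendsto (fun k : ℕ => (k:ℝ)^2 * c - k) atTop atTop := by
  have hev : ∀ᶠ k : ℕ in atTop, (k:ℝ) ≤ (k:ℝ)^2 * c - k := by
    filter_upwards [eventually_ge_atTop ⌈2/c⌉₊] with k hk
    have hkc : 2/c ≤ (k:ℝ) := le_trans (Nat.le_ceil _) (by exact_mod_cast hk)
    have hk2 : 2 ≤ (k:ℝ) * c := by rw [div_le_iff₀ hc] at hkc; linarith
    have hk0 : (0:ℝ) ≤ (k:ℝ) := Nat.cast_nonneg k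
    nlinarith
  exact tendsto_atTop_mono' _ hev tendsto_natCast_atTop_atTop

lemma arg_tendsto_bot {c : ℝ} (hc : c ≤ 0) :
    Tendsto (fun k : ℕ => (k:ℝ)^2 * c - k) atTop atBot := by
  have hle : ∀ k : ℕ, (k:ℝ)^2 * c - k ≤ -(k:ℝ) := by
    intro k; nlinarith [sq_nonneg (k:ℝ)]
  exact tendsto_atBot_mono hle
    (tendsto_neg_atTop_atBot.comp tendsto_natCast_atTop_atTop)

lemma tendsto_integral_sigmoid {m : ℕ} (P : Measure (Fin m → ℝ)) [IsProbabilityMeasure P]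
    (a : Fin m → ℝ) (b τ : ℝ) :
    Tendsto (fun k : ℕ => ∫ z, sigmoid ((k:ℝ)^2 * ((∑ i, a i * z i) + b - τ) - k) ∂P)
      atTop (𝓝 ((P {z | τ < (∑ i, a i * z i) + b}).toReal)) := by
  have hf : Measurable fun z : Fin m → ℝ => (∑ i, a i * z i) + b := by
    apply Measurable.add _ measurable_const
    exact Finset.measurable_sum _ fun i _ => by fun_prop
  set S : Set (Fin m → ℝ) := {z | τ < (∑ i, a i * z i) + b} with hSdef
  have hS : MeasurableSet S := measurableSet_lt measurable_const hf
  have key : Tendsto (fun k : ℕ => ∫ z, sigmoid ((k:ℝ)^2 * ((∑ i, a i * z i) + b - τ) - k) ∂P)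
      atTop (𝓝 (∫ z, S.indicator (fun _ => (1:ℝ)) z ∂P)) := by
    apply tendsto_integral_of_dominated_convergence (fun _ => (1:ℝ))
    · intro k
      exact (sigmoid_continuous.measurable.comp
        (((hf.sub measurable_const).const_mul _).sub measurable_const)).aestronglyMeasurable
    · exact integrable_const 1
    · intro k
      filter_upwards with z
      rw [Real.norm_eq_abs, abs_le]
      exact ⟨by linarith [sigmoid_nonneg ((k:ℝ)^2 * ((∑ i, a i * z i) + b - τ) - k)],
        sigmoid_le_one _⟩
    · filter_upwards with z
      by_cases hz : τ < (∑ i, a i * z i) + b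
      · have hmem : z ∈ S := hz
        have := sigmoid_tendsto_one.comp (arg_tendsto_top (c := (∑ i, a i * z i) + b - τ)
          (by linarith))
        simpa [Set.indicator_of_mem hmem, Function.comp_def] using this
      · have hmem : z ∉ S := hz
        have := sigmoid_tendsto_zero.comp (arg_tendsto_bot (c := (∑ i, a i * z i) + b - τ)
          (by push_neg at hz; linarith))
        simpa [Set.indicator_of_notMem hmem, Function.comp_def] using this
  have hind : (∫ z, S.indicator (fun _ => (1:ℝ)) z ∂P) = (P S).toReal := by
    rw [integral_indicator hS]
    simp [Measure.real]
  rwa [hind] at key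

/-- for affine prediction models `f(z) = aᵀz + b`, there is a constant
`c > 0` not depending on `ε` such that whenever `d_sig(P₀,P₁) < ε`, all thresholded
demographic-parity gaps are small:
`sup_{f affine, τ} |P₀{z : f(z) > τ} - P₁{z : f(z) > τ}| < c·ε`. -/
theorem linear_classifier_DP_bound {m : ℕ} :
    ∃ c : ℝ, 0 < c ∧
      ∀ (P₀ P₁ : Measure (Fin m → ℝ)),
        IsProbabilityMeasure P₀ → IsProbabilityMeasure P₁ →
        ∀ ε : ℝ, 0 < ε → sigmoidIPM P₀ P₁ < ε →
          ∀ (a : Fin m → ℝ) (b τ : ℝ),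
            |(P₀ {z | τ < (∑ i, a i * z i) + b}).toReal -
              (P₁ {z | τ < (∑ i, a i * z i) + b}).toReal| < c * ε := by
  refine ⟨2, two_pos, ?_⟩
  intro P₀ P₁ h₀ h₁ ε hε hIPM a b τ
  -- each term of the IPM family is bounded, hence ≤ the sup
  have hbd : ∀ (P : Measure (Fin m → ℝ)), IsProbabilityMeasure P →
      ∀ p : (Fin m → ℝ) × ℝ, ‖∫ z, sigmoid ((∑ i, p.1 i * z i) + p.2) ∂P‖ ≤ 1 := by
    intro P hP p
    have := norm_integral_le_of_norm_le_const (μ := P)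
      (f := fun z => sigmoid ((∑ i, p.1 i * z i) + p.2)) (C := 1) ?_
    · simpa using this
    · filter_upwards with z
      rw [Real.norm_eq_abs, abs_le]
      exact ⟨by linarith [sigmoid_nonneg ((∑ i, p.1 i * z i) + p.2)], sigmoid_le_one _⟩
  have hbdd : BddAbove (Set.range fun p : (Fin m → ℝ) × ℝ =>
      |(∫ z, sigmoid ((∑ i, p.1 i * z i) + p.2) ∂P₀) -
        ∫ z, sigmoid ((∑ i, p.1 i * z i) + p.2) ∂P₁|) := by
    refine ⟨2, ?_⟩
    rintro x ⟨p, rfl⟩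
    have h0 := hbd P₀ h₀ p
    have h1 := hbd P₁ h₁ p
    rw [Real.norm_eq_abs] at h0 h1
    calc |(∫ z, sigmoid ((∑ i, p.1 i * z i) + p.2) ∂P₀) -
          ∫ z, sigmoid ((∑ i, p.1 i * z i) + p.2) ∂P₁|
        ≤ |∫ z, sigmoid ((∑ i, p.1 i * z i) + p.2) ∂P₀| +
          |∫ z, sigmoid ((∑ i, p.1 i * z i) + p.2) ∂P₁| := abs_sub _ _
      _ ≤ 2 := by linarith
  have hterm : ∀ p : (Fin m → ℝ) × ℝ,
      |(∫ z, sigmoid ((∑ i, p.1 i * z i) + p.2) ∂P₀) -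
        ∫ z, sigmoid ((∑ i, p.1 i * z i) + p.2) ∂P₁| ≤ sigmoidIPM P₀ P₁ :=
    fun p => le_ciSup hbdd p
  have t₀ := tendsto_integral_sigmoid P₀ a b τ
  have t₁ := tendsto_integral_sigmoid P₁ a b τ
  have tdiff := (t₀.sub t₁).abs
  have hle : |(P₀ {z | τ < (∑ i, a i * z i) + b}).toReal -
      (P₁ {z | τ < (∑ i, a i * z i) + b}).toReal| ≤ sigmoidIPM P₀ P₁ := by
    refine le_of_tendsto tdiff (Eventually.of_forall fun k => ?_)
    have hrw : ∀ z : Fin m → ℝ,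
        (∑ i, ((k:ℝ)^2 * a i) * z i) + ((k:ℝ)^2 * (b - τ) - k) =
          (k:ℝ)^2 * ((∑ i, a i * z i) + b - τ) - k := by
      intro z
      rw [show (k:ℝ)^2 * ((∑ i, a i * z i) + b - τ) - k
        = (k:ℝ)^2 * (∑ i, a i * z i) + ((k:ℝ)^2 * (b - τ) - k) by ring, Finset.mul_sum]
      congr 1
      exact Finset.sum_congr rfl fun i _ => by ring
    have := hterm (fun i => (k:ℝ)^2 * a i, (k:ℝ)^2 * (b - τ) - k)
    simpa only [hrw] using this
  have : sigmoidIPM P₀ P₁ < 2 * ε := by linarith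
  linarith
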